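/- Let (X, d) be a complete metric space, let a < b, and let γ : (a, b) → X be a curve that is absolutely continuous in the sense that there exists m ∈ L¹(a, b), m ≥ 0, with d(γ(s), γ(t)) ≤ ∫_s^t m(r) dr for all a < s ≤ t < b. Then for Lebesgue-almost every t ∈ (a, b) the metric derivative |γ'|(t) := lim_{s→t} d(γ(s), γ(t)) / |s − t| exists; moreover there is a nonnegative function v ∈ L¹(a, b) such that v(t) equals this limit for a.e. t, and v(t) ≤ m(t) for a.e. t ∈ (a, b), for every m satisfying the above absolute-continuity condition. -/

import Mathlib

open Filter Topology MeasureTheory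
open Set

section AuxLemmas

lemma uIoc_subset_cb {s t : ℝ} : Set.uIoc s t ⊆ Metric.closedBall t |s - t| := by
  intro y hy
  rcases hy with ⟨h1, h2⟩
  simp only [Metric.mem_closedBall, Real.dist_eq]
  rcases le_total s t with h | h
  · simp only [inf_eq_left.2 h, sup_eq_right.2 h] at h1 h2
    rw [abs_le, abs_sub_comm, abs_of_nonneg (sub_nonneg.2 h)]
    constructor <;> linarith
  · simp only [inf_eq_right.2 h, sup_eq_left.2 h] at h1 h2
    rw [abs_le, abs_of_nonneg (sub_nonneg.2 h)]
    constructor <;> linarith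

/-- Lebesgue points: the averaged absolute deviation over `uIoc s t` tends to 0. -/
lemma ae_tendsto_uIoc_abs_sub (h : ℝ → ℝ) (hint : Integrable h) :
    ∀ᵐ t, Tendsto (fun s : ℝ => (∫ r in Set.uIoc s t, |h r - h t|) / |s - t|)
      (𝓝[≠] t) (𝓝 0) := by
  filter_upwards [IsUnifLocDoublingMeasure.ae_tendsto_average_norm_sub (μ := volume)
    hint.locallyIntegrable 1] with t ht
  have hδ : Tendsto (fun s : ℝ => |s - t|) (𝓝[≠] t) (𝓝[>] 0) := by
    apply tendsto_nhdsWithin_of_tendsto_nhds_of_eventually_within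
    · have : Tendsto (fun s : ℝ => |s - t|) (𝓝 t) (𝓝 |t - t|) :=
        ((continuous_id.sub continuous_const).abs).tendsto t
      simpa using this.mono_left nhdsWithin_le_nhds
    · filter_upwards [self_mem_nhdsWithin] with s hs
      exact abs_pos.2 (sub_ne_zero.2 hs)
  have key := ht (fun _ : ℝ => t) (fun s : ℝ => |s - t|) hδ
    (by filter_upwards [self_mem_nhdsWithin] with s _; simp)
  have hle : ∀ᶠ s in 𝓝[≠] t,
      (∫ r in Set.uIoc s t, |h r - h t|) / |s - t| ≤
        2 * ⨍ y in Metric.closedBall t |s - t|, ‖h y - h t‖ := by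
    filter_upwards [self_mem_nhdsWithin] with s hs
    have hst : (0:ℝ) < |s - t| := abs_pos.2 (sub_ne_zero.2 hs)
    have hsub : ∫ r in Set.uIoc s t, |h r - h t| ≤
        ∫ y in Metric.closedBall t |s - t|, ‖h y - h t‖ := by
      apply setIntegral_mono_set
      · exact ((hint.integrableOn.sub (integrableOn_const
          measure_closedBall_lt_top.ne)).norm)
      · filter_upwards with y
        show (0:ℝ) ≤ ‖h y - h t‖
        positivity
      · exact HasSubset.Subset.eventuallyLE uIoc_subset_cb
    have hvol : (volume (Metric.closedBall t |s - t|)).toReal = 2 * |s - t| := by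
      rw [Real.volume_closedBall]
      exact ENNReal.toReal_ofReal (by positivity)
    rw [average_eq, smul_eq_mul, measureReal_restrict_apply_univ, measureReal_def, hvol]
    rw [div_le_iff₀ hst]
    set A := ∫ y in Metric.closedBall t |s - t|, ‖h y - h t‖
    have : 2 * ((2 * |s - t|)⁻¹ * A) * |s - t| = A := by
      field_simp
    rw [this]
    simpa using hsub
  have hge : ∀ᶠ s in 𝓝[≠] t,
      0 ≤ (∫ r in Set.uIoc s t, |h r - h t|) / |s - t| := by
    filter_upwards with s
    apply div_nonneg _ (abs_nonneg _)
    exact setIntegral_nonneg measurableSet_uIoc fun r _ => abs_nonneg _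
  have h2 : Tendsto (fun s : ℝ => 2 * ⨍ y in Metric.closedBall t |s - t|, ‖h y - h t‖)
      (𝓝[≠] t) (𝓝 0) := by
    simpa using (key.const_mul (2:ℝ))
  exact squeeze_zero' hge hle h2

lemma ae_tendsto_uIoc_div (h : ℝ → ℝ) (hint : Integrable h) :
    ∀ᵐ t, Tendsto (fun s : ℝ => (∫ r in Set.uIoc s t, h r) / |s - t|)
      (𝓝[≠] t) (𝓝 (h t)) := by
  filter_upwards [ae_tendsto_uIoc_abs_sub h hint] with t ht
  rw [tendsto_iff_dist_tendsto_zero]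
  apply squeeze_zero' (.of_forall fun s => dist_nonneg) _ ht
  filter_upwards [self_mem_nhdsWithin] with s hs
  have hst : (0:ℝ) < |s - t| := abs_pos.2 (sub_ne_zero.2 hs)
  have hvol : (volume (Set.uIoc s t)).toReal = |s - t| := by
    rw [Set.uIoc, Real.volume_Ioc, ENNReal.toReal_ofReal (by simp)]
    rcases le_total s t with h' | h'
    · rw [sup_eq_right.2 h', inf_eq_left.2 h', abs_sub_comm, abs_of_nonneg (by linarith)]
    · rw [sup_eq_left.2 h', inf_eq_right.2 h', abs_of_nonneg (by linarith)]
  have hconst : ∫ _r in Set.uIoc s t, h t = |s - t| * h t := by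
    rw [setIntegral_const, smul_eq_mul, measureReal_def, hvol]
  have hsplit : (∫ r in Set.uIoc s t, h r) - |s - t| * h t
      = ∫ r in Set.uIoc s t, (h r - h t) := by
    rw [← hconst, ← integral_sub hint.integrableOn]
    exact integrableOn_const (by rw [Set.uIoc, Real.volume_Ioc]; exact ENNReal.ofReal_ne_top)
  have heq : dist ((∫ r in Set.uIoc s t, h r) / |s - t|) (h t)
      = |∫ r in Set.uIoc s t, (h r - h t)| / |s - t| := by
    have e1 : (∫ r in Set.uIoc s t, h r) / |s - t| - h t
        = ((∫ r in Set.uIoc s t, h r) - |s - t| * h t) / |s - t| := by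
      field_simp
    rw [Real.dist_eq, e1, abs_div, abs_abs, hsplit]
  rw [heq]
  gcongr
  calc |∫ r in Set.uIoc s t, (h r - h t)| = ‖∫ r in Set.uIoc s t, (h r - h t)‖ := (Real.norm_eq_abs _).symm
  _ ≤ ∫ r in Set.uIoc s t, ‖h r - h t‖ := norm_integral_le_integral_norm _
  _ = ∫ r in Set.uIoc s t, |h r - h t| := by simp [Real.norm_eq_abs]

lemma monotone_integral_deriv_le {g : ℝ → ℝ} (hm : Monotone g) (hc : Continuous g)
    {s t : ℝ} (hst : s ≤ t) : ∫ x in Set.Ioo s t, deriv g x ≤ g t - g s := by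
  set f : ℕ → ℝ → ℝ := fun k x => (k + 1 : ℝ) * (g (x + 1 / (k + 1)) - g x) with hf
  have hkpos : ∀ k : ℕ, (0:ℝ) < 1 / ((k:ℝ) + 1) := fun k => by positivity
  have hfpos : ∀ k x, 0 ≤ f k x := by
    intro k x
    have hx : x ≤ x + 1 / ((k:ℝ) + 1) := by linarith [hkpos k]
    exact mul_nonneg (by positivity) (sub_nonneg.2 (hm hx))
  have hfmeas : ∀ k, Measurable (f k) :=
    fun k => measurable_const.mul ((hc.measurable.comp (measurable_id.add_const _)).sub
      hc.measurable)
  have hfcont : ∀ k, Continuous (f k) :=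
    fun k => continuous_const.mul ((hc.comp (continuous_id.add continuous_const)).sub hc)
  -- pointwise convergence to deriv at differentiability points
  have hconv : ∀ᵐ x, Tendsto (fun k => f k x) atTop (𝓝 (deriv g x)) := by
    filter_upwards [hm.ae_differentiableAt] with x hx
    have hd := hx.hasDerivAt
    have h2 : Tendsto (fun k : ℕ => x + 1 / ((k:ℝ) + 1)) atTop (𝓝[≠] x) := by
      apply tendsto_nhdsWithin_of_tendsto_nhds_of_eventually_within
      · simpa using (tendsto_const_nhds (x := x)).add tendsto_one_div_add_atTop_nhds_zero_nat
      · filter_upwards with k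
        show x + 1 / ((k:ℝ) + 1) ∈ ({x}ᶜ : Set ℝ)
        simp only [Set.mem_compl_iff, Set.mem_singleton_iff]
        intro hcontra
        nlinarith [hkpos k]
    have := (hasDerivAt_iff_tendsto_slope.1 hd).comp h2
    refine this.congr fun k => ?_
    show slope g x (x + 1 / ((k:ℝ) + 1)) = f k x
    rw [slope_def_field]
    rw [add_sub_cancel_left]
    have hA : ∀ A : ℝ, A / (1 / ((k:ℝ)+1)) = ((k:ℝ)+1) * A := by
      intro A
      rw [div_div_eq_mul_div, div_one, mul_comm]
    rw [one_div] at hA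
    simp only [hf, one_div]
    exact hA _
  -- deriv g ≥ 0 a.e.
  have hderiv_nonneg : ∀ᵐ x, 0 ≤ deriv g x := by
    filter_upwards [hconv] with x hx
    exact ge_of_tendsto' hx fun k => hfpos k x
  -- Fatou
  have fatou : ∫⁻ x in Set.Ioo s t, ENNReal.ofReal (deriv g x)
      ≤ liminf (fun k => ∫⁻ x in Set.Ioo s t, ENNReal.ofReal (f k x)) atTop := by
    have : ∫⁻ x in Set.Ioo s t, ENNReal.ofReal (deriv g x)
        = ∫⁻ x in Set.Ioo s t, liminf (fun k => ENNReal.ofReal (f k x)) atTop := by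
      apply lintegral_congr_ae
      apply ae_restrict_of_ae
      filter_upwards [hconv] with x hx
      exact (((ENNReal.continuous_ofReal.tendsto _).comp hx).liminf_eq).symm
    rw [this]
    exact lintegral_liminf_le fun k => (hfmeas k).ennreal_ofReal
  -- compute ∫ f k over Ioo s t
  have hint : ∀ k, ∫ x in Set.Ioo s t, f k x ≤ g (t + 1 / ((k:ℝ)+1)) - g s := by
    intro k
    set c := 1 / ((k:ℝ) + 1) with hcdef
    have hc0 : 0 < c := hkpos k
    have hii : ∀ u v : ℝ, IntervalIntegrable g volume u v := fun u v =>
      hc.intervalIntegrable u v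
    have e1 : ∫ x in Set.Ioo s t, f k x = ∫ x in s..t, f k x := by
      rw [intervalIntegral.integral_of_le hst, integral_Ioc_eq_integral_Ioo]
    have e2 : ∫ x in s..t, f k x
        = ((k:ℝ)+1) * ((∫ x in s..t, g (x + c)) - ∫ x in s..t, g x) := by
      rw [← intervalIntegral.integral_sub ((by fun_prop :
          Continuous fun x => g (x + c)).intervalIntegrable s t) (hii s t),
        ← intervalIntegral.integral_const_mul]
    have e3 : ∫ x in s..t, g (x + c) = ∫ x in (s+c)..(t+c), g x :=
      intervalIntegral.integral_comp_add_right g c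
    have e4 : (∫ x in (s+c)..(t+c), g x) - ∫ x in s..t, g x
        = (∫ x in t..(t+c), g x) - ∫ x in s..(s+c), g x := by
      have h1 : (∫ x in s..(s+c), g x) + ∫ x in (s+c)..(t+c), g x = ∫ x in s..(t+c), g x :=
        intervalIntegral.integral_add_adjacent_intervals (hii _ _) (hii _ _)
      have h2 : (∫ x in s..t, g x) + ∫ x in t..(t+c), g x = ∫ x in s..(t+c), g x :=
        intervalIntegral.integral_add_adjacent_intervals (hii _ _) (hii _ _)
      linarith
    have e5 : ∫ x in t..(t+c), g x ≤ c * g (t + c) := by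
      have := intervalIntegral.integral_mono_on (by linarith) (hii t (t+c))
        (intervalIntegrable_const) (fun x hx => hm hx.2)
      simpa using this
    have e6 : c * g s ≤ ∫ x in s..(s+c), g x := by
      have := intervalIntegral.integral_mono_on (by linarith) intervalIntegrable_const
        (hii s (s+c)) (fun x hx => hm hx.1)
      simpa using this
    rw [e1, e2, e3, e4]
    have hk1 : ((k:ℝ)+1) * c = 1 := by
      rw [hcdef]; field_simp
    calc ((k:ℝ)+1) * ((∫ x in t..(t+c), g x) - ∫ x in s..(s+c), g x)
        ≤ ((k:ℝ)+1) * (c * g (t+c) - c * g s) := by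
          apply mul_le_mul_of_nonneg_left _ (by positivity)
          linarith
      _ = g (t + c) - g s := by
          rw [mul_sub, ← mul_assoc, ← mul_assoc, hk1]
          ring
  -- convert and conclude
  have hlim : liminf (fun k => ∫⁻ x in Set.Ioo s t, ENNReal.ofReal (f k x)) atTop
      ≤ ENNReal.ofReal (g t - g s) := by
    have h1 : ∀ k, ∫⁻ x in Set.Ioo s t, ENNReal.ofReal (f k x)
        = ENNReal.ofReal (∫ x in Set.Ioo s t, f k x) := by
      intro k
      rw [← ofReal_integral_eq_lintegral_ofReal
        ((hfcont k).integrableOn_Icc.mono_set Set.Ioo_subset_Icc_self)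
        (Filter.Eventually.of_forall fun x => hfpos k x)]
    calc liminf (fun k => ∫⁻ x in Set.Ioo s t, ENNReal.ofReal (f k x)) atTop
        = liminf (fun k => ENNReal.ofReal (∫ x in Set.Ioo s t, f k x)) atTop := by
          simp_rw [h1]
      _ ≤ liminf (fun k : ℕ => ENNReal.ofReal (g (t + 1 / ((k:ℝ)+1)) - g s)) atTop := by
          exact Filter.liminf_le_liminf (f := Filter.atTop)
            (u := fun k : ℕ => ENNReal.ofReal (∫ x in Set.Ioo s t, f k x))
            (v := fun k : ℕ => ENNReal.ofReal (g (t + 1 / ((k:ℝ)+1)) - g s))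
            (Filter.Eventually.of_forall fun k => ENNReal.ofReal_le_ofReal (hint k))
      _ = ENNReal.ofReal (g t - g s) := by
          have hg : Tendsto (fun k : ℕ => g (t + 1 / ((k:ℝ)+1)) - g s) atTop
              (𝓝 (g t - g s)) := by
            have h2 : Tendsto (fun k : ℕ => t + 1 / ((k:ℝ) + 1)) atTop (𝓝 t) := by
              simpa using (tendsto_const_nhds (x := t)).add tendsto_one_div_add_atTop_nhds_zero_nat
            simpa using ((hc.tendsto t).comp h2).sub (tendsto_const_nhds (x := g s))
          simpa [Function.comp_def] using
            (((ENNReal.continuous_ofReal.tendsto _).comp hg).liminf_eq)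
  -- conclude
  have hnonneg : 0 ≤ᵐ[volume.restrict (Set.Ioo s t)] deriv g := ae_restrict_of_ae hderiv_nonneg
  have hmeas' : AEStronglyMeasurable (deriv g) (volume.restrict (Set.Ioo s t)) :=
    (measurable_deriv g).aestronglyMeasurable
  rw [integral_eq_lintegral_of_nonneg_ae hnonneg hmeas']
  have hfin := fatou.trans hlim
  calc (∫⁻ x in Set.Ioo s t, ENNReal.ofReal (deriv g x)).toReal
      ≤ (ENNReal.ofReal (g t - g s)).toReal :=
        ENNReal.toReal_mono ENNReal.ofReal_ne_top hfin
    _ = g t - g s := ENNReal.toReal_ofReal (sub_nonneg.2 (hm hst))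

lemma monotoneOn_integral_deriv_le {g : ℝ → ℝ} {s t : ℝ} (hst : s ≤ t)
    (hm : MonotoneOn g (Set.Icc s t)) (hc : ContinuousOn g (Set.Icc s t)) :
    ∫ x in Set.Ioo s t, deriv g x ≤ g t - g s := by
  set cl : ℝ → ℝ := fun r => max s (min r t) with hcl
  have hclmem : ∀ r, cl r ∈ Set.Icc s t := fun r =>
    ⟨le_max_left _ _, max_le hst (min_le_right _ _)⟩
  have hclmono : Monotone cl := fun u v huv => max_le_max le_rfl (min_le_min huv le_rfl)
  have hG : Monotone (g ∘ cl) := fun u v huv => hm (hclmem u) (hclmem v) (hclmono huv)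
  have hGc : Continuous (g ∘ cl) := hc.comp_continuous
    (continuous_const.max (continuous_id.min continuous_const)) hclmem
  have key := monotone_integral_deriv_le hG hGc hst
  have hcls : cl s = s := by simp [hcl, min_eq_left hst]
  have hclt : cl t = t := by simp [hcl, max_eq_right hst]
  have hder : ∀ x ∈ Set.Ioo s t, deriv (g ∘ cl) x = deriv g x := by
    intro x hx
    apply Filter.EventuallyEq.deriv_eq
    filter_upwards [Ioo_mem_nhds hx.1 hx.2] with y hy
    show g (cl y) = g y
    rw [hcl]
    simp only [min_eq_left hy.2.le, max_eq_right hy.1.le]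
  calc ∫ x in Set.Ioo s t, deriv g x
      = ∫ x in Set.Ioo s t, deriv (g ∘ cl) x :=
        setIntegral_congr_fun measurableSet_Ioo fun x hx => (hder x hx).symm
    _ ≤ (g ∘ cl) t - (g ∘ cl) s := key
    _ = g t - g s := by simp only [Function.comp_apply, hcls, hclt]

lemma primitive_hasDerivAt {M : ℝ → ℝ} (hM : Integrable M) (a : ℝ) :
    ∀ᵐ t, HasDerivAt (fun u => ∫ r in a..u, M r) (M t) t := by
  filter_upwards [ae_tendsto_uIoc_div M hM] with t ht
  rw [hasDerivAt_iff_tendsto_slope]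
  apply ht.congr'
  filter_upwards [self_mem_nhdsWithin] with s hs
  have hs' : s ≠ t := hs
  have hsub : slope (fun u => ∫ r in a..u, M r) t s = (∫ r in t..s, M r) / (s - t) := by
    rw [slope_def_field]
    congr 1
    have := intervalIntegral.integral_add_adjacent_intervals
      (hM.intervalIntegrable (a := a) (b := t)) (hM.intervalIntegrable (a := t) (b := s))
    linarith
  rw [hsub]
  rcases lt_or_gt_of_ne hs' with h | h
  · -- s < t
    have e1 : Set.uIoc s t = Set.Ioc s t := Set.uIoc_of_le h.le
    have e2 : |s - t| = t - s := by rw [abs_sub_comm, abs_of_nonneg (by linarith)]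
    rw [e1, e2, intervalIntegral.integral_symm, intervalIntegral.integral_of_le h.le]
    rw [neg_div, ← div_neg, neg_sub]
  · -- t < s
    have e1 : Set.uIoc s t = Set.Ioc t s := by rw [Set.uIoc_comm, Set.uIoc_of_le h.le]
    have e2 : |s - t| = s - t := abs_of_nonneg (by linarith)
    rw [e1, e2, intervalIntegral.integral_of_le h.le]

end AuxLemmas


/-- A curve `γ` on `(a, b)` with values in a metric space `X` admits `m` as an
upper gradient bound if `m` is nonnegative, integrable on `(a, b)`, and
`d(γ(s), γ(t)) ≤ ∫_s^t m(r) dr` for all `a < s ≤ t < b`. -/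
def IsACBound {X : Type*} [MetricSpace X] (a b : ℝ) (γ : ℝ → X) (m : ℝ → ℝ) : Prop :=
  IntegrableOn m (Set.Ioo a b) ∧ (∀ r, 0 ≤ m r) ∧
    ∀ s t : ℝ, a < s → s ≤ t → t < b → dist (γ s) (γ t) ≤ ∫ r in s..t, m r

/-- **Existence and minimality of the metric derivative.** If `γ : (a,b) → X` is absolutely
continuous (i.e., admits some integrable bound `m` as above), then for a.e. `t ∈ (a,b)`
the metric derivative `|γ'|(t) = lim_{s → t} d(γ(s), γ(t))/|s − t|` exists; it is given a.e.
by a nonnegative function `v ∈ L¹(a,b)` which satisfies `v ≤ m` a.e. on `(a,b)` for every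
admissible bound `m`. -/
theorem metric_derivative_exists_ae_and_minimal {X : Type*} [MetricSpace X] [CompleteSpace X]
    (a b : ℝ) (hab : a < b) (γ : ℝ → X)
    (hAC : ∃ m : ℝ → ℝ, IsACBound a b γ m) :
    ∃ v : ℝ → ℝ, IntegrableOn v (Set.Ioo a b) ∧ (∀ t, 0 ≤ v t) ∧
      (∀ᵐ t ∂(volume.restrict (Set.Ioo a b)),
        Tendsto (fun s : ℝ => dist (γ s) (γ t) / |s - t|) (𝓝[≠] t) (𝓝 (v t))) ∧
      ∀ m : ℝ → ℝ, IsACBound a b γ m →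
        ∀ᵐ t ∂(volume.restrict (Set.Ioo a b)), v t ≤ m t := by
  classical
  obtain ⟨m0, hm0⟩ := hAC
  have hMint : ∀ m : ℝ → ℝ, IsACBound a b γ m →
      Integrable ((Set.Ioo a b).indicator m) := fun m hm =>
    (MeasureTheory.integrable_indicator_iff measurableSet_Ioo).2 hm.1
  have huIcc_sub : ∀ u ∈ Set.Ioo a b, ∀ v ∈ Set.Ioo a b, Set.uIcc u v ⊆ Set.Ioo a b := by
    intro u hu v hv r hr
    rw [Set.uIcc] at hr
    constructor
    · exact lt_of_lt_of_le (lt_inf_iff.2 ⟨hu.1, hv.1⟩) hr.1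
    · exact lt_of_le_of_lt hr.2 (sup_lt_iff.2 ⟨hu.2, hv.2⟩)
  have dist_le_int : ∀ m : ℝ → ℝ, IsACBound a b γ m → ∀ u ∈ Set.Ioo a b, ∀ v ∈ Set.Ioo a b,
      dist (γ u) (γ v) ≤ ∫ r in Set.uIoc u v, (Set.Ioo a b).indicator m r := by
    have base : ∀ m : ℝ → ℝ, IsACBound a b γ m → ∀ u ∈ Set.Ioo a b, ∀ v ∈ Set.Ioo a b, u ≤ v →
        dist (γ u) (γ v) ≤ ∫ r in Set.uIoc u v, (Set.Ioo a b).indicator m r := by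
      intro m hm u hu v hv huv
      have e1 : Set.uIoc u v = Set.Ioc u v := Set.uIoc_of_le huv
      have e2 : ∫ r in Set.Ioc u v, (Set.Ioo a b).indicator m r
          = ∫ r in u..v, (Set.Ioo a b).indicator m r :=
        (intervalIntegral.integral_of_le huv).symm
      have e3 : ∫ r in u..v, (Set.Ioo a b).indicator m r = ∫ r in u..v, m r :=
        intervalIntegral.integral_congr fun r hr =>
          Set.indicator_of_mem (huIcc_sub u hu v hv hr) m
      rw [e1, e2, e3]
      exact hm.2.2 u v hu.1 huv hv.2
    intro m hm u hu v hv
    rcases le_total u v with huv | hvu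
    · exact base m hm u hu v hv huv
    · rw [dist_comm, Set.uIoc_comm]
      exact base m hm v hv u hu hvu
  -- primitive of the reference bound
  set M0 : ℝ → ℝ := (Set.Ioo a b).indicator m0 with hM0def
  have hM0int : Integrable M0 := hMint m0 hm0
  have hM0nonneg : ∀ r, 0 ≤ M0 r := fun r => Set.indicator_nonneg (fun y _ => hm0.2.1 y) r
  set F0 : ℝ → ℝ := fun u => ∫ r in a..u, M0 r with hF0def
  have hF0sub : ∀ u v : ℝ, F0 v - F0 u = ∫ r in u..v, M0 r := by
    intro u v
    have := intervalIntegral.integral_add_adjacent_intervals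
      (hM0int.intervalIntegrable (a := a) (b := u)) (hM0int.intervalIntegrable (a := u) (b := v))
    simp only [hF0def]
    linarith
  have hF0mono : Monotone F0 := by
    intro u v huv
    have h1 := hF0sub u v
    have h2 : 0 ≤ ∫ r in u..v, M0 r :=
      intervalIntegral.integral_nonneg huv fun r _ => hM0nonneg r
    linarith
  have hF0cont : Continuous F0 :=
    intervalIntegral.continuous_primitive (fun _ _ => hM0int.intervalIntegrable) a
  have hdistF : ∀ u ∈ Set.Ioo a b, ∀ v ∈ Set.Ioo a b, u ≤ v →
      dist (γ u) (γ v) ≤ F0 v - F0 u := by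
    intro u hu v hv huv
    have h := dist_le_int m0 hm0 u hu v hv
    rw [Set.uIoc_of_le huv, ← intervalIntegral.integral_of_le huv] at h
    rw [hF0sub u v]
    exact h
  have hdistF' : ∀ u ∈ Set.Ioo a b, ∀ v ∈ Set.Ioo a b,
      dist (γ u) (γ v) ≤ |F0 u - F0 v| := by
    intro u hu v hv
    rcases le_total u v with h | h
    · rw [abs_sub_comm, abs_of_nonneg (sub_nonneg.2 (hF0mono h))]
      exact hdistF u hu v hv h
    · rw [abs_of_nonneg (sub_nonneg.2 (hF0mono h)), dist_comm]
      exact hdistF v hv u hu h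
  have hγcont : ContinuousOn γ (Set.Ioo a b) := by
    intro u hu
    rw [Metric.continuousWithinAt_iff]
    intro ε hε
    obtain ⟨δ, hδ, hδ'⟩ := Metric.continuous_iff.1 hF0cont u ε hε
    refine ⟨δ, hδ, fun {v} hv hvd => ?_⟩
    calc dist (γ v) (γ u) ≤ |F0 v - F0 u| := hdistF' v hv u hu
      _ = dist (F0 v) (F0 u) := (Real.dist_eq _ _).symm
      _ < ε := hδ' v hvd
  -- countable dense family in the image
  set t0 : ℝ := (a + b) / 2 with ht0def
  have ht0 : t0 ∈ Set.Ioo a b := ⟨by rw [ht0def]; linarith, by rw [ht0def]; linarith⟩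
  obtain ⟨c, hc_count, hc_sub⟩ :
      TopologicalSpace.IsSeparable (γ '' Set.Ioo a b) := by
    rw [Set.image_eq_range]
    exact TopologicalSpace.isSeparable_range
      (continuousOn_iff_continuous_restrict.1 hγcont)
  obtain ⟨x, hx⟩ : ∃ x : ℕ → X, insert (γ t0) c = Set.range x :=
    (hc_count.insert _).exists_eq_range (Set.insert_nonempty _ _)
  have happrox : ∀ t ∈ Set.Ioo a b, ∀ ε > 0, ∃ n, dist (γ t) (x n) < ε := by
    intro t ht ε hε
    have h1 : γ t ∈ closure (Set.range x) := by
      rw [← hx]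
      exact closure_mono (Set.subset_insert _ _) (hc_sub ⟨t, ht, rfl⟩)
    obtain ⟨y, ⟨n, rfl⟩, hy⟩ := Metric.mem_closure_iff.1 h1 ε hε
    exact ⟨n, hy⟩
  -- the auxiliary functions φ n
  set φ : ℕ → ℝ → ℝ := fun n r => dist (γ r) (x n) with hφdef
  have hφabs : ∀ n u v, |φ n u - φ n v| ≤ dist (γ u) (γ v) := fun n u v =>
    abs_dist_sub_le _ _ _
  have hφF : ∀ n, ∀ u ∈ Set.Ioo a b, ∀ v ∈ Set.Ioo a b, u ≤ v →
      |φ n v - φ n u| ≤ F0 v - F0 u := by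
    intro n u hu v hv huv
    calc |φ n v - φ n u| ≤ dist (γ v) (γ u) := hφabs n v u
      _ = dist (γ u) (γ v) := dist_comm _ _
      _ ≤ F0 v - F0 u := hdistF u hu v hv huv
  have hg_mono : ∀ n, MonotoneOn (fun r => φ n r + F0 r) (Set.Ioo a b) := by
    intro n u hu v hv huv
    have h := abs_le.1 (hφF n u hu v hv huv)
    dsimp only
    linarith [h.1]
  have hh_mono : ∀ n, MonotoneOn (fun r => F0 r - φ n r) (Set.Ioo a b) := by
    intro n u hu v hv huv
    have h := abs_le.1 (hφF n u hu v hv huv)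
    dsimp only
    linarith [h.2]
  have hφcont : ∀ n, ContinuousOn (φ n) (Set.Ioo a b) := fun n =>
    Continuous.comp_continuousOn (continuous_id.dist continuous_const) hγcont
  -- a.e. differentiability of φ n
  have hφdiff : ∀ n, ∀ᵐ t, t ∈ Set.Ioo a b → DifferentiableAt ℝ (φ n) t := by
    intro n
    filter_upwards [(hg_mono n).locallyBoundedVariationOn.ae_differentiableWithinAt_of_mem,
      hF0mono.ae_differentiableAt] with t h1 h2 ht
    have hg : DifferentiableAt ℝ (fun r => φ n r + F0 r) t :=
      (h1 ht).differentiableAt (Ioo_mem_nhds ht.1 ht.2)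
    have h3 : DifferentiableAt ℝ (fun r => (φ n r + F0 r) - F0 r) t := hg.sub h2
    simpa using h3
  -- a.e. derivative bound, for every admissible bound m
  have habs_bound : ∀ m : ℝ → ℝ, IsACBound a b γ m →
      ∀ᵐ t, t ∈ Set.Ioo a b → ∀ n, |deriv (φ n) t| ≤ m t := by
    intro m hm
    filter_upwards [ae_all_iff.2 hφdiff,
      ae_tendsto_uIoc_div ((Set.Ioo a b).indicator m) (hMint m hm)] with t h1 h2 ht n
    have hd : HasDerivAt (φ n) (deriv (φ n) t) t := (h1 n ht).hasDerivAt
    have hA : Tendsto (fun s => |slope (φ n) t s|) (𝓝[≠] t) (𝓝 |deriv (φ n) t|) :=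
      (hasDerivAt_iff_tendsto_slope.1 hd).abs
    have hEv : ∀ᶠ s in 𝓝[≠] t, |slope (φ n) t s|
        ≤ (∫ r in Set.uIoc s t, (Set.Ioo a b).indicator m r) / |s - t| := by
      filter_upwards [self_mem_nhdsWithin,
        mem_nhdsWithin_of_mem_nhds (Ioo_mem_nhds ht.1 ht.2)] with s hs hsIoo
      have hst : (0:ℝ) < |s - t| := abs_pos.2 (sub_ne_zero.2 hs)
      have e1 : |slope (φ n) t s| = |φ n s - φ n t| / |s - t| := by
        rw [slope_def_field, abs_div]
      rw [e1, div_le_div_iff_of_pos_right hst]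
      exact (hφabs n s t).trans (dist_le_int m hm s hsIoo t ht)
    have hres := le_of_tendsto_of_tendsto hA h2 hEv
    rwa [Set.indicator_of_mem ht] at hres
  -- definition of v
  set U : ℝ → ENNReal := fun r => ⨆ n, ENNReal.ofReal |deriv (φ n) r| with hUdef
  set v : ℝ → ℝ := (Set.Ioo a b).indicator (fun r => (U r).toReal) with hvdef
  have hv0 : ∀ t, 0 ≤ v t := fun t =>
    Set.indicator_nonneg (fun r _ => ENNReal.toReal_nonneg) t
  have hUmeas : Measurable U :=
    Measurable.iSup fun n => ((measurable_deriv (φ n)).abs).ennreal_ofReal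
  have hvmeas : Measurable v := (hUmeas.ennreal_toReal).indicator measurableSet_Ioo
  have hvle : ∀ m : ℝ → ℝ, IsACBound a b γ m → ∀ᵐ t, t ∈ Set.Ioo a b → v t ≤ m t := by
    intro m hm
    filter_upwards [habs_bound m hm] with t h ht
    have hU : U t ≤ ENNReal.ofReal (m t) :=
      iSup_le fun n => ENNReal.ofReal_le_ofReal (h ht n)
    rw [hvdef]
    rw [Set.indicator_of_mem ht]
    calc (U t).toReal ≤ (ENNReal.ofReal (m t)).toReal :=
          ENNReal.toReal_mono ENNReal.ofReal_ne_top hU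
      _ = m t := ENNReal.toReal_ofReal (hm.2.1 t)
  have hminimal : ∀ m : ℝ → ℝ, IsACBound a b γ m →
      ∀ᵐ t ∂(volume.restrict (Set.Ioo a b)), v t ≤ m t := fun m hm =>
    (ae_restrict_iff' measurableSet_Ioo).2 (hvle m hm)
  have hvint : IntegrableOn v (Set.Ioo a b) := by
    apply Integrable.mono' hm0.1 hvmeas.aestronglyMeasurable
    apply (ae_restrict_iff' measurableSet_Ioo).2
    filter_upwards [hvle m0 hm0] with t h ht
    rw [Real.norm_eq_abs, abs_of_nonneg (hv0 t)]
    exact h ht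
  have hvglobal : Integrable v := by
    have h1 : IntegrableOn (fun r => (U r).toReal) (Set.Ioo a b) := by
      apply hvint.congr_fun _ measurableSet_Ioo
      intro r hr
      rw [hvdef]
      exact (Set.indicator_of_mem hr _)
    rw [hvdef]
    exact (integrable_indicator_iff measurableSet_Ioo).2 h1
  have hF0deriv : ∀ᵐ t, HasDerivAt F0 (M0 t) t := primitive_hasDerivAt hM0int a
  -- FTC: |φ n t - φ n s| ≤ ∫ v on Ioo s t
  have hftc : ∀ n, ∀ s ∈ Set.Ioo a b, ∀ t ∈ Set.Ioo a b, s ≤ t →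
      |φ n t - φ n s| ≤ ∫ r in Set.Ioo s t, v r := by
    intro n s hs t ht hst
    have hIcc : Set.Icc s t ⊆ Set.Ioo a b := fun r hr =>
      ⟨lt_of_lt_of_le hs.1 hr.1, lt_of_le_of_lt hr.2 ht.2⟩
    have hIoo : Set.Ioo s t ⊆ Set.Ioo a b := Set.Ioo_subset_Icc_self.trans hIcc
    have hb0 : ∀ᵐ r ∂(volume.restrict (Set.Ioo s t)), |deriv (φ n) r| ≤ M0 r := by
      apply (ae_restrict_iff' measurableSet_Ioo).2
      filter_upwards [habs_bound m0 hm0] with r h hr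
      rw [hM0def, Set.indicator_of_mem (hIoo hr)]
      exact h (hIoo hr) n
    have hdint : IntegrableOn (deriv (φ n)) (Set.Ioo s t) :=
      Integrable.mono' hM0int.integrableOn (measurable_deriv _).aestronglyMeasurable
        (by filter_upwards [hb0] with r h; rwa [Real.norm_eq_abs])
    have hM0Ioo : ∫ r in Set.Ioo s t, M0 r = F0 t - F0 s := by
      rw [hF0sub, intervalIntegral.integral_of_le hst, integral_Ioc_eq_integral_Ioo]
    have hg1 := monotoneOn_integral_deriv_le hst ((hg_mono n).mono hIcc)
      (((hφcont n).mono hIcc).add hF0cont.continuousOn)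
    have hg2 := monotoneOn_integral_deriv_le hst ((hh_mono n).mono hIcc)
      (hF0cont.continuousOn.sub ((hφcont n).mono hIcc))
    have hae1 : ∀ᵐ r ∂(volume.restrict (Set.Ioo s t)),
        deriv (fun u => φ n u + F0 u) r = deriv (φ n) r + M0 r := by
      apply (ae_restrict_iff' measurableSet_Ioo).2
      filter_upwards [hφdiff n, hF0deriv] with r h1 h2 hr
      rw [deriv_fun_add (h1 (hIoo hr)) h2.differentiableAt, h2.deriv]
    have hae2 : ∀ᵐ r ∂(volume.restrict (Set.Ioo s t)),
        deriv (fun u => F0 u - φ n u) r = M0 r - deriv (φ n) r := by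
      apply (ae_restrict_iff' measurableSet_Ioo).2
      filter_upwards [hφdiff n, hF0deriv] with r h1 h2 hr
      rw [deriv_fun_sub h2.differentiableAt (h1 (hIoo hr)), h2.deriv]
    have hI1 : ∫ r in Set.Ioo s t, deriv (fun u => φ n u + F0 u) r
        = (∫ r in Set.Ioo s t, deriv (φ n) r) + (F0 t - F0 s) := by
      rw [integral_congr_ae hae1, integral_add hdint hM0int.integrableOn, hM0Ioo]
    have hI2 : ∫ r in Set.Ioo s t, deriv (fun u => F0 u - φ n u) r
        = (F0 t - F0 s) - ∫ r in Set.Ioo s t, deriv (φ n) r := by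
      rw [integral_congr_ae hae2, integral_sub hM0int.integrableOn hdint, hM0Ioo]
    have heq : φ n t - φ n s = ∫ r in Set.Ioo s t, deriv (φ n) r := by
      have l1 := hI1 ▸ hg1
      have l2 := hI2 ▸ hg2
      linarith
    have hvcomp : ∀ᵐ r ∂(volume.restrict (Set.Ioo s t)), |deriv (φ n) r| ≤ v r := by
      apply (ae_restrict_iff' measurableSet_Ioo).2
      filter_upwards [habs_bound m0 hm0] with r h hr
      have hrm : r ∈ Set.Ioo a b := hIoo hr
      have hUfin : U r ≠ ⊤ :=
        ne_top_of_le_ne_top ENNReal.ofReal_ne_top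
          (iSup_le fun k => ENNReal.ofReal_le_ofReal (h hrm k))
      rw [hvdef]
      rw [Set.indicator_of_mem hrm]
      calc |deriv (φ n) r| = (ENNReal.ofReal |deriv (φ n) r|).toReal :=
            (ENNReal.toReal_ofReal (abs_nonneg _)).symm
        _ ≤ (U r).toReal := ENNReal.toReal_mono hUfin
            (le_iSup (fun k => ENNReal.ofReal |deriv (φ k) r|) n)
    calc |φ n t - φ n s| = |∫ r in Set.Ioo s t, deriv (φ n) r| := by rw [heq]
      _ ≤ ∫ r in Set.Ioo s t, |deriv (φ n) r| := by
          simpa [Real.norm_eq_abs] using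
            norm_integral_le_integral_norm (μ := volume.restrict (Set.Ioo s t)) (deriv (φ n))
      _ ≤ ∫ r in Set.Ioo s t, v r := integral_mono_ae hdint.abs (hvint.mono_set hIoo) hvcomp
  -- key distance bound via v
  have hvkey : ∀ p ∈ Set.Ioo a b, ∀ q ∈ Set.Ioo a b,
      dist (γ p) (γ q) ≤ ∫ r in Set.uIoc p q, v r := by
    have base : ∀ p ∈ Set.Ioo a b, ∀ q ∈ Set.Ioo a b, p ≤ q →
        dist (γ p) (γ q) ≤ ∫ r in Set.uIoc p q, v r := by
      intro p hp q hq hpq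
      rw [Set.uIoc_of_le hpq, integral_Ioc_eq_integral_Ioo]
      apply le_of_forall_pos_le_add
      intro ε hε
      obtain ⟨n, hn⟩ := happrox q hq (ε/2) (by linarith)
      have h1 : dist (γ p) (γ q) ≤ φ n p + ε/2 := by
        calc dist (γ p) (γ q) ≤ dist (γ p) (x n) + dist (x n) (γ q) := dist_triangle _ _ _
          _ = φ n p + dist (γ q) (x n) := by rw [dist_comm (x n)]
          _ ≤ φ n p + ε/2 := by
              have : dist (γ q) (x n) ≤ ε/2 := le_of_lt hn
              linarith
      have h2 : φ n p ≤ φ n q + |φ n q - φ n p| := by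
        rcases abs_cases (φ n q - φ n p) with ⟨h', _⟩ | ⟨h', _⟩ <;> linarith
      have h3 : |φ n q - φ n p| ≤ ∫ r in Set.Ioo p q, v r := hftc n p hp q hq hpq
      have h4 : φ n q < ε/2 := hn
      linarith
    intro p hp q hq
    rcases le_total p q with h | h
    · exact base p hp q hq h
    · rw [dist_comm, Set.uIoc_comm]
      exact base q hq p hp h
  -- conclusion
  refine ⟨v, hvint, hv0, ?_, hminimal⟩
  apply (ae_restrict_iff' measurableSet_Ioo).2
  filter_upwards [ae_all_iff.2 hφdiff, habs_bound m0 hm0, ae_tendsto_uIoc_div v hvglobal]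
    with t hdiff hbnd hP4 ht
  rw [Metric.tendsto_nhds]
  intro ε hε
  have hIooEv : ∀ᶠ s in 𝓝[≠] t, s ∈ Set.Ioo a b :=
    mem_nhdsWithin_of_mem_nhds (Ioo_mem_nhds ht.1 ht.2)
  have hup : ∀ᶠ s in 𝓝[≠] t, dist (γ s) (γ t) / |s - t| < v t + ε := by
    have h1 : ∀ᶠ s in 𝓝[≠] t, (∫ r in Set.uIoc s t, v r) / |s - t| < v t + ε :=
      hP4.eventually (eventually_lt_nhds (show v t < v t + ε by linarith))
    filter_upwards [h1, hIooEv, self_mem_nhdsWithin] with s h1s hsIoo hst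
    have hpos : (0:ℝ) < |s - t| := abs_pos.2 (sub_ne_zero.2 hst)
    calc dist (γ s) (γ t) / |s - t| ≤ (∫ r in Set.uIoc s t, v r) / |s - t| := by
          rw [div_le_div_iff_of_pos_right hpos]
          exact hvkey s hsIoo t ht
      _ < v t + ε := h1s
  have hlow : ∀ᶠ s in 𝓝[≠] t, v t - ε < dist (γ s) (γ t) / |s - t| := by
    rcases lt_or_ge (v t - ε) 0 with hneg | hpos
    · filter_upwards with s
      exact lt_of_lt_of_le hneg (div_nonneg dist_nonneg (abs_nonneg _))
    · have hvt : v t = (U t).toReal := by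
        rw [hvdef]
        exact Set.indicator_of_mem ht _
      obtain ⟨n, hn⟩ : ∃ n, v t - ε < |deriv (φ n) t| := by
        by_contra hcon
        push_neg at hcon
        have hU : U t ≤ ENNReal.ofReal (v t - ε) :=
          iSup_le fun k => ENNReal.ofReal_le_ofReal (hcon k)
        have hle2 : (U t).toReal ≤ v t - ε := by
          calc (U t).toReal ≤ (ENNReal.ofReal (v t - ε)).toReal :=
                ENNReal.toReal_mono ENNReal.ofReal_ne_top hU
            _ = v t - ε := ENNReal.toReal_ofReal hpos
        linarith [hvt, hle2]
      have hd : HasDerivAt (φ n) (deriv (φ n) t) t := (hdiff n ht).hasDerivAt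
      have hA : Tendsto (fun s => |slope (φ n) t s|) (𝓝[≠] t) (𝓝 |deriv (φ n) t|) :=
        (hasDerivAt_iff_tendsto_slope.1 hd).abs
      have h2 := hA.eventually (eventually_gt_nhds hn)
      filter_upwards [h2, self_mem_nhdsWithin] with s hs2 hst
      have hposd : (0:ℝ) < |s - t| := abs_pos.2 (sub_ne_zero.2 hst)
      have h3 : |slope (φ n) t s| ≤ dist (γ s) (γ t) / |s - t| := by
        rw [slope_def_field, abs_div, div_le_div_iff_of_pos_right hposd]
        exact hφabs n s t
      linarith
  filter_upwards [hup, hlow] with s h1 h2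
  rw [Real.dist_eq, abs_sub_lt_iff]
  constructor <;> linarith
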